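/- (Cycle Lemma, Dvoretzky–Motzkin) Let k, q, p be nonnegative integers and let a be a (k, qk+p)-arrangement, i.e. a cyclic sequence of length n = (q+1)k + p with exactly k entries equal to 1 and qk+p entries equal to 0. Then exactly p of the n positions r ∈ ℤ/nℤ are such that the linearization a_{r+1}, a_{r+2}, …, a_{r+n} (indices mod n) is a q-dominating sequence. -/

import Mathlib

/-- A sequence of 0's (`false`) and 1's (`true`) is `q`-dominating if in every
nonempty prefix the number of 0's strictly exceeds `q` times the number of 1's. -/
def QDominating (q : ℕ) (l : List Bool) : Prop :=
  ∀ m : ℕ, 1 ≤ m → m ≤ l.length →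
    q * (l.take m).count true < (l.take m).count false

/-- The linearization of a cyclic arrangement `a : ZMod n → Bool` ending at
position `r`: the linear sequence `a (r+1), a (r+2), …, a (r+n)`. -/
def linearization {n : ℕ} (a : ZMod n → Bool) (r : ZMod n) : List Bool :=
  (List.range n).map (fun j => a (r + ((j + 1 : ℕ) : ZMod n)))

namespace CycleAux

open Finset

variable {n : ℕ} (q : ℕ) (a : ZMod n → Bool)

/-- Weight of position `i`. -/
def wgt (i : ℕ) : ℤ := if a (i : ZMod n) then -(q : ℤ) else 1

/-- Partial sums of weights. -/
def psum (t : ℕ) : ℤ := ∑ j ∈ Finset.range t, wgt q a j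

lemma wgt_le_one (i : ℕ) : wgt q a i ≤ 1 := by
  unfold wgt
  split_ifs
  · have : (0 : ℤ) ≤ (q : ℤ) := Int.natCast_nonneg q
    linarith
  · exact le_refl 1

lemma psum_succ (t : ℕ) : psum q a (t + 1) = psum q a t + wgt q a t :=
  Finset.sum_range_succ _ t

lemma psum_add (t m : ℕ) :
    psum q a (t + m) = psum q a t + ∑ j ∈ Finset.range m, wgt q a (t + j) := by
  induction m with
  | zero => simp
  | succ m ih =>
    rw [← add_assoc, psum_succ, ih, Finset.sum_range_succ]
    ring

lemma sum_ite_card (s : Finset ℕ) (P : ℕ → Prop) [DecidablePred P] :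
    ∑ j ∈ s, (if P j then -(q : ℤ) else 1)
      = ((s.filter fun j => ¬ P j).card : ℤ) - q * ((s.filter P).card : ℤ) := by
  rw [← Finset.sum_filter_add_sum_filter_not s P]
  rw [Finset.sum_ite_of_true (by intro i hi; exact (Finset.mem_filter.mp hi).2),
    Finset.sum_ite_of_false (by intro i hi; exact (Finset.mem_filter.mp hi).2)]
  simp [mul_comm]
  ring

lemma card_window [NeZero n] (t : ℕ) (b : Bool) :
    ((Finset.range n).filter fun j => a ((t + j : ℕ) : ZMod n) = b).card
      = (Finset.univ.filter fun i : ZMod n => a i = b).card := by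
  apply Finset.card_nbij' (i := fun j => ((t + j : ℕ) : ZMod n))
    (j := fun i => ((i - (t : ZMod n)).val))
  · intro j hj
    simp only [Finset.mem_coe, Finset.mem_filter, Finset.mem_range] at hj
    simp only [Finset.mem_coe, Finset.mem_filter, Finset.mem_univ, true_and]
    exact hj.2
  · intro i hi
    simp only [Finset.mem_coe, Finset.mem_filter, Finset.mem_range] at hi ⊢
    constructor
    · exact ZMod.val_lt _
    · have : ((t + (i - (t : ZMod n)).val : ℕ) : ZMod n) = i := by
        push_cast
        rw [ZMod.natCast_val, ZMod.cast_id]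
        ring
      rw [this]
      exact hi.2
  · intro j hj
    simp only [Finset.mem_coe, Finset.mem_filter, Finset.mem_range] at hj
    push_cast
    rw [add_sub_cancel_left]
    exact ZMod.val_cast_of_lt hj.1
  · intro i _
    push_cast
    rw [ZMod.natCast_val, ZMod.cast_id]
    ring

lemma psum_window [NeZero n] (t : ℕ) :
    ∑ j ∈ Finset.range n, wgt q a (t + j)
      = ((Finset.univ.filter fun i : ZMod n => a i = false).card : ℤ)
        - q * ((Finset.univ.filter fun i : ZMod n => a i = true).card : ℤ) := by
  classical
  unfold wgt
  have h := sum_ite_card q (Finset.range n) (fun j => a ((t + j : ℕ) : ZMod n) = true)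
  rw [show (∑ j ∈ Finset.range n, if a ((t + j : ℕ) : ZMod n) = true then -(q:ℤ) else 1)
      = ∑ j ∈ Finset.range n, if a ((t + j : ℕ) : ZMod n) then -(q:ℤ) else 1 from rfl] at h
  rw [h]
  rw [card_window a t true]
  have : ((Finset.range n).filter fun j => ¬ (a ((t + j : ℕ) : ZMod n) = true))
      = (Finset.range n).filter fun j => a ((t + j : ℕ) : ZMod n) = false := by
    apply Finset.filter_congr
    intro j _
    simp [Bool.not_eq_true]
  rw [this, card_window a t false]

section Period

variable (p : ℕ)

/-- The goodness predicate: all windows of length `1..n` after `t` have positive sum. -/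
def Good (t : ℕ) : Prop := ∀ m, 1 ≤ m → m ≤ n → psum q a t < psum q a (t + m)

variable {q a p} in
lemma good_shift (hper : ∀ t, psum q a (t + n) = psum q a t + p) (t : ℕ) :
    Good q a (t + n) ↔ Good q a t := by
  unfold Good
  have key : ∀ m, psum q a (t + n + m) = psum q a (t + m) + p := by
    intro m
    have : t + n + m = t + m + n := by ring
    rw [this, hper]
  constructor
  · intro h m h1 h2
    have := h m h1 h2
    rw [key, hper] at this
    linarith
  · intro h m h1 h2
    rw [key, hper]
    have := h m h1 h2
    linarith

variable [NeZero n]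

/-- Running minimum over a window of length `n`. -/
noncomputable def M (t : ℕ) : ℤ :=
  (Finset.range n).inf' (Finset.nonempty_range_iff.mpr (NeZero.ne n))
    (fun j => psum q a (t + j))

lemma M_le (t j : ℕ) (hj : j < n) : M q a t ≤ psum q a (t + j) :=
  Finset.inf'_le _ (Finset.mem_range.mpr hj)

lemma le_M (t : ℕ) (c : ℤ) (h : ∀ j, j < n → c ≤ psum q a (t + j)) : c ≤ M q a t :=
  Finset.le_inf' _ _ (fun j hj => h j (Finset.mem_range.mp hj))

lemma exists_M (t : ℕ) : ∃ j, j < n ∧ M q a t = psum q a (t + j) := by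
  obtain ⟨j, hj, h⟩ := Finset.exists_mem_eq_inf' (Finset.nonempty_range_iff.mpr (NeZero.ne n))
    (fun j => psum q a (t + j))
  exact ⟨j, Finset.mem_range.mp hj, h⟩

variable {q a p}
lemma M_step1 (hp : 1 ≤ p) (t : ℕ) (hG : Good q a t) :
    M q a (t + 1) = M q a t + 1 := by
  have hMt : M q a t = psum q a t := by
    apply le_antisymm
    · simpa using M_le q a t 0 (Nat.pos_of_ne_zero (NeZero.ne n))
    · obtain ⟨j, hj, hEq⟩ := exists_M q a t
      rcases Nat.eq_zero_or_pos j with h0 | h1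
      · simp [hEq, h0]
      · have := hG j h1 (le_of_lt hj)
        rw [hEq]
        linarith
  have h1 : M q a (t + 1) ≤ psum q a t + 1 := by
    have := M_le q a (t + 1) 0 (Nat.pos_of_ne_zero (NeZero.ne n))
    rw [add_zero, psum_succ] at this
    have hw := wgt_le_one q a t
    linarith
  have h2 : psum q a t + 1 ≤ M q a (t + 1) := by
    apply le_M
    intro j hj
    have heq : t + 1 + j = t + (j + 1) := by ring
    rw [heq]
    have := hG (j + 1) (Nat.le_add_left 1 j) hj
    linarith
  rw [hMt]
  linarith

lemma M_step2 (hper : ∀ t, psum q a (t + n) = psum q a t + p) (hp : 1 ≤ p) (t : ℕ)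
    (hG : ¬ Good q a t) : M q a (t + 1) = M q a t := by
  unfold Good at hG
  push_neg at hG
  obtain ⟨m, hm1, hmn, hle⟩ := hG
  have hb : M q a (t + 1) ≤ psum q a t := by
    have hlt : m - 1 < n := by omega
    have := M_le q a (t + 1) (m - 1) hlt
    have heq : t + 1 + (m - 1) = t + m := by omega
    rw [heq] at this
    linarith
  apply le_antisymm
  · apply le_M
    intro j hj
    rcases Nat.eq_zero_or_pos j with h0 | h1
    · rw [h0, add_zero]
      exact hb
    · have hlt : j - 1 < n := by omega
      have := M_le q a (t + 1) (j - 1) hlt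
      have heq : t + 1 + (j - 1) = t + j := by omega
      rw [heq] at this
      exact this
  · apply le_M
    intro j hj
    rcases Nat.lt_or_ge (j + 1) n with h | h
    · have := M_le q a t (j + 1) h
      have heq : t + (j + 1) = t + 1 + j := by ring
      rw [heq] at this
      exact this
    · have heq : t + 1 + j = t + n := by omega
      rw [heq, hper]
      have h0 := M_le q a t 0 (Nat.pos_of_ne_zero (NeZero.ne n))
      rw [add_zero] at h0
      have hp' : (1 : ℤ) ≤ (p : ℤ) := by exact_mod_cast hp
      linarith

lemma M_period (hper : ∀ t, psum q a (t + n) = psum q a t + p) :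
    M q a n = M q a 0 + p := by
  apply le_antisymm
  · obtain ⟨j, hj, hEq⟩ := exists_M q a 0
    have h1 := M_le q a n j hj
    have heq : n + j = j + n := by ring
    rw [heq, hper] at h1
    rw [zero_add] at hEq
    rw [hEq]
    linarith
  · apply le_M
    intro j hj
    have heq : n + j = j + n := by ring
    rw [heq, hper]
    have := M_le q a 0 j hj
    rw [zero_add] at this
    linarith

open scoped Classical in
lemma count_good (hper : ∀ t, psum q a (t + n) = psum q a t + p) (hp : 1 ≤ p) :
    ((Finset.range n).filter fun t => Good q a t).card = p := by
  have htel : ∑ t ∈ Finset.range n, (M q a (t + 1) - M q a t) = M q a n - M q a 0 :=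
    Finset.sum_range_sub _ _
  have hsum : ∑ t ∈ Finset.range n, (if Good q a t then (1 : ℤ) else 0) = p := by
    calc ∑ t ∈ Finset.range n, (if Good q a t then (1 : ℤ) else 0)
        = ∑ t ∈ Finset.range n, (M q a (t + 1) - M q a t) := by
          apply Finset.sum_congr rfl
          intro t _
          by_cases hG : Good q a t
          · rw [if_pos hG, M_step1 hp t hG]
            ring
          · rw [if_neg hG, M_step2 hper hp t hG]
            ring
      _ = M q a n - M q a 0 := htel
      _ = p := by rw [M_period hper]; ring
  rw [Finset.sum_boole] at hsum
  exact_mod_cast hsum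

end Period

lemma count_map_range (f : ℕ → Bool) (m : ℕ) (b : Bool) :
    ((List.range m).map f).count b
      = ((Finset.range m).filter fun j => f j = b).card := by
  classical
  induction m with
  | zero => simp
  | succ m ih =>
    rw [List.range_succ, List.map_append, List.count_append, Finset.range_add_one,
      Finset.filter_insert]
    by_cases h : f m = b
    · rw [if_pos h, Finset.card_insert_of_notMem (by simp)]
      simp [h, ih]
    · rw [if_neg h]
      simp only [List.map_singleton, List.count_singleton']
      simp [h, ih]

lemma counts_psum [NeZero n] (r : ZMod n) (m : ℕ) (hm : m ≤ n) :
    psum q a ((r + 1).val + m) = psum q a ((r + 1).val)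
      + (((((linearization a r).take m).count false : ℕ) : ℤ)
         - q * (((((linearization a r).take m).count true : ℕ)) : ℤ)) := by
  classical
  have hentry : ∀ j : ℕ, a ((((r + 1).val + j : ℕ)) : ZMod n) = a (r + ((j + 1 : ℕ) : ZMod n)) := by
    intro j
    congr 1
    push_cast
    rw [ZMod.natCast_val, ZMod.cast_id]
    ring
  rw [psum_add]
  congr 1
  have htake : (linearization a r).take m
      = (List.range m).map (fun j => a (r + ((j + 1 : ℕ) : ZMod n))) := by
    rw [linearization, ← List.map_take, List.take_range, min_eq_left hm]
  have hsum : ∑ j ∈ Finset.range m, wgt q a ((r + 1).val + j)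
      = ∑ j ∈ Finset.range m, (if a (r + ((j + 1 : ℕ) : ZMod n)) = true then -(q : ℤ) else 1) := by
    apply Finset.sum_congr rfl
    intro j _
    unfold wgt
    rw [hentry j]
  rw [hsum, sum_ite_card q (Finset.range m) (fun j => a (r + ((j + 1 : ℕ) : ZMod n)) = true),
    htake, count_map_range, count_map_range]
  have hfneg : ((Finset.range m).filter fun j => ¬ (a (r + ((j + 1 : ℕ) : ZMod n)) = true))
      = (Finset.range m).filter fun j => a (r + ((j + 1 : ℕ) : ZMod n)) = false := by
    apply Finset.filter_congr
    intro j _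
    simp [Bool.not_eq_true]
  rw [hfneg]

lemma dominating_iff [NeZero n] (r : ZMod n) :
    QDominating q (linearization a r) ↔ Good q a ((r + 1).val) := by
  have hlen : (linearization a r).length = n := by simp [linearization]
  unfold QDominating Good
  simp only [hlen]
  constructor
  · intro h m h1 h2
    have hc := h m h1 h2
    have hps := counts_psum q a r m h2
    rw [hps]
    have hc' : (q : ℤ) * ((((linearization a r).take m).count true : ℕ) : ℤ)
        < ((((linearization a r).take m).count false : ℕ) : ℤ) := by exact_mod_cast hc
    linarith
  · intro h m h1 h2
    have hps := counts_psum q a r m h2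
    have hlt := h m h1 h2
    rw [hps] at hlt
    have hc' : (q : ℤ) * ((((linearization a r).take m).count true : ℕ) : ℤ)
        < ((((linearization a r).take m).count false : ℕ) : ℤ) := by linarith
    exact_mod_cast hc'

open scoped Classical in
lemma card_shift [NeZero n] :
    (Finset.univ.filter fun r : ZMod n => Good q a ((r + 1).val)).card
      = ((Finset.range n).filter fun t => Good q a t).card := by
  refine Finset.card_nbij' (fun r => (r + 1).val) (fun t => (t : ZMod n) - 1) ?_ ?_ ?_ ?_
  · intro r hr
    simp only [Finset.mem_coe, Finset.mem_filter, Finset.mem_univ, true_and] at hr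
    simp only [Finset.mem_coe, Finset.mem_filter, Finset.mem_range]
    exact ⟨ZMod.val_lt _, hr⟩
  · intro t ht
    simp only [Finset.mem_coe, Finset.mem_filter, Finset.mem_range] at ht
    simp only [Finset.mem_coe, Finset.mem_filter, Finset.mem_univ, true_and]
    rw [sub_add_cancel, ZMod.val_cast_of_lt ht.1]
    exact ht.2
  · intro r _
    simp only []
    rw [ZMod.natCast_val, ZMod.cast_id]
    ring
  · intro t ht
    simp only [Finset.mem_coe, Finset.mem_filter, Finset.mem_range] at ht
    simp only []
    rw [sub_add_cancel, ZMod.val_cast_of_lt ht.1]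

end CycleAux

lemma nat_card_setOf {n : ℕ} [NeZero n] (P : ZMod n → Prop) [DecidablePred P] :
    Nat.card {i : ZMod n | P i} = (Finset.univ.filter P).card := by
  rw [Nat.card_eq_fintype_card]
  simp [Set.mem_setOf_eq, Fintype.card_subtype]

theorem cycle_lemma (k q p : ℕ) (a : ZMod ((q + 1) * k + p) → Bool)
    (hones : Nat.card {i : ZMod ((q + 1) * k + p) | a i = true} = k)
    (hzeros : Nat.card {i : ZMod ((q + 1) * k + p) | a i = false} = q * k + p) :
    Nat.card {r : ZMod ((q + 1) * k + p) | QDominating q (linearization a r)} = p := by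
  classical
  by_cases hn0 : (q + 1) * k + p = 0
  · -- degenerate case: the cyclic group is `ZMod 0 = ℤ`
    have hp0 : p = 0 := (Nat.add_eq_zero.mp hn0).2
    subst hp0
    have hinf : Infinite (ZMod ((q + 1) * k + 0)) := by
      rw [hn0]
      exact Int.infinite
    have hset : {r : ZMod ((q + 1) * k + 0) | QDominating q (linearization a r)}
        = Set.univ := by
      ext r
      simp only [Set.mem_setOf_eq, Set.mem_univ, iff_true]
      intro m h1 h2
      have hlen : (linearization a r).length = (q + 1) * k + 0 := by
        simp [linearization]
      omega
    rw [hset, Nat.card_coe_set_eq, Set.ncard_univ]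
    exact Nat.card_eq_zero_of_infinite
  · haveI : NeZero ((q + 1) * k + p) := ⟨hn0⟩
    rw [nat_card_setOf] at hones hzeros ⊢
    have hper : ∀ t, CycleAux.psum q a (t + ((q + 1) * k + p))
        = CycleAux.psum q a t + p := by
      intro t
      rw [CycleAux.psum_add, CycleAux.psum_window q a t, hones, hzeros]
      push_cast
      ring
    have hfilter : (Finset.univ.filter
          fun r : ZMod ((q + 1) * k + p) => QDominating q (linearization a r))
        = Finset.univ.filter
          fun r : ZMod ((q + 1) * k + p) => CycleAux.Good q a ((r + 1).val) := by
      apply Finset.filter_congr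
      intro r _
      simp only [CycleAux.dominating_iff q a r]
    rw [hfilter]
    rcases Nat.eq_zero_or_pos p with hp0 | hp1
    · have hzero : (Finset.univ.filter
          fun r : ZMod ((q + 1) * k + p) => CycleAux.Good q a ((r + 1).val)).card = 0 := by
        rw [Finset.card_eq_zero, Finset.filter_eq_empty_iff]
        intro r _
        intro hG
        have hnlt := hG ((q + 1) * k + p) (Nat.one_le_iff_ne_zero.mpr hn0) le_rfl
        rw [hper ((r + 1).val)] at hnlt
        have hpz : (p : ℤ) = 0 := by exact_mod_cast hp0
        linarith
      omega
    · rw [CycleAux.card_shift, CycleAux.count_good hper hp1]
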